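/- Let λ < -1/4 be such that λ ∉ B. Let P_n denote the path with n vertices and let v be one of the endpoints of P_n. Then for every λ' ∈ ℝ and every ε > 0, there exists a positive integer n such that Z^{out}_{P_n,v}(λ) ≠ 0 and |Z^{in}_{P_n,v}(λ)/Z^{out}_{P_n,v}(λ) - λ'| ≤ ε. -/

import Mathlib

open scoped Classical

/-- The set of independent sets of a finite simple graph `G`, as a `Finset` of `Finset`s
(including the empty set). -/
noncomputable def indepFinsets {V : Type*} [Fintype V] (G : SimpleGraph V) : Finset (Finset V) :=
  Finset.univ.filter fun I => ∀ u ∈ I, ∀ w ∈ I, ¬ G.Adj u w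

/-- The hard-core partition function `Z_G(λ) = ∑_{I ∈ I_G} λ^{|I|}`. -/
noncomputable def hcZ {V : Type*} [Fintype V] (G : SimpleGraph V) (lam : ℝ) : ℝ :=
  ∑ I ∈ indepFinsets G, lam ^ I.card

/-- `Z^{in}_{G,v}(λ)`: contribution of independent sets containing `v`. -/
noncomputable def hcZin {V : Type*} [Fintype V] (G : SimpleGraph V) (v : V) (lam : ℝ) : ℝ :=
  ∑ I ∈ (indepFinsets G).filter (fun I => v ∈ I), lam ^ I.card

/-- `Z^{out}_{G,v}(λ)`: contribution of independent sets not containing `v`. -/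
noncomputable def hcZout {V : Type*} [Fintype V] (G : SimpleGraph V) (v : V) (lam : ℝ) : ℝ :=
  ∑ I ∈ (indepFinsets G).filter (fun I => v ∉ I), lam ^ I.card

/-- The "bad" set `B`: reals `λ` of the form `-1/(4 cos² θ)` for some `θ ∈ (0, π/2)`
which is a rational multiple of `π`. -/
def badSet : Set ℝ :=
  {lam | ∃ θ : ℝ, θ ∈ Set.Ioo 0 (Real.pi / 2) ∧ (∃ q : ℚ, θ = (q : ℝ) * Real.pi) ∧
    lam = -1 / (4 * (Real.cos θ) ^ 2)}

namespace PathDense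

open Finset SimpleGraph Real

lemma mem_indepFinsets {V : Type*} [Fintype V] {G : SimpleGraph V} {I : Finset V} :
    I ∈ indepFinsets G ↔ ∀ u ∈ I, ∀ w ∈ I, ¬ G.Adj u w := by
  simp [indepFinsets]

lemma pg_adj_succ {n : ℕ} (i j : Fin n) :
    (pathGraph (n+1)).Adj i.succ j.succ ↔ (pathGraph n).Adj i j := by
  simp only [pathGraph_adj, Fin.val_succ]; omega

lemma map_mem_indep {n : ℕ} {J : Finset (Fin n)} :
    J.map (Fin.succEmb n) ∈ indepFinsets (pathGraph (n+1)) ↔ J ∈ indepFinsets (pathGraph n) := by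
  simp only [mem_indepFinsets, Finset.mem_map, Fin.coe_succEmb]
  constructor
  · intro h u hu w hw hadj
    exact h _ ⟨u, hu, rfl⟩ _ ⟨w, hw, rfl⟩ ((pg_adj_succ u w).2 hadj)
  · rintro h _ ⟨u, hu, rfl⟩ _ ⟨w, hw, rfl⟩ hadj
    exact h u hu w hw ((pg_adj_succ u w).1 hadj)

lemma filter_out_eq (n : ℕ) :
    (indepFinsets (pathGraph (n+1))).filter (fun I => (0 : Fin (n+1)) ∉ I)
      = (indepFinsets (pathGraph n)).image (fun J => J.map (Fin.succEmb n)) := by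
  ext I
  simp only [Finset.mem_filter, Finset.mem_image]
  constructor
  · rintro ⟨hI, h0⟩
    refine ⟨I.preimage Fin.succ (Fin.succ_injective n).injOn, ?_, ?_⟩
    · rw [← map_mem_indep]
      convert hI using 1
      ext x
      simp only [Finset.mem_map, Finset.mem_preimage, Fin.coe_succEmb]
      constructor
      · rintro ⟨i, hi, rfl⟩; exact hi
      · intro hx
        rcases Fin.eq_zero_or_eq_succ x with rfl | ⟨i, rfl⟩
        · exact absurd hx h0
        · exact ⟨i, hx, rfl⟩
    · ext x
      simp only [Finset.mem_map, Finset.mem_preimage, Fin.coe_succEmb]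
      constructor
      · rintro ⟨i, hi, rfl⟩; exact hi
      · intro hx
        rcases Fin.eq_zero_or_eq_succ x with rfl | ⟨i, rfl⟩
        · exact absurd hx h0
        · exact ⟨i, hx, rfl⟩
  · rintro ⟨J, hJ, rfl⟩
    refine ⟨map_mem_indep.2 hJ, ?_⟩
    simp only [Finset.mem_map, Fin.coe_succEmb]
    rintro ⟨i, _, hi⟩
    exact Fin.succ_ne_zero i hi

lemma filter_in_eq (n : ℕ) :
    (indepFinsets (pathGraph (n+1))).filter (fun I => (0 : Fin (n+1)) ∈ I)
      = ((indepFinsets (pathGraph n)).filter (fun J => ∀ i ∈ J, Fin.val i ≠ 0)).image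
          (fun J => insert 0 (J.map (Fin.succEmb n))) := by
  ext I
  simp only [Finset.mem_filter, Finset.mem_image]
  constructor
  · rintro ⟨hI, h0⟩
    set J := (I.erase 0).preimage Fin.succ (Fin.succ_injective n).injOn with hJdef
    have hmemJ : ∀ i : Fin n, i ∈ J ↔ i.succ ∈ I := by
      intro i
      simp only [hJdef, Finset.mem_preimage, Finset.mem_erase]
      exact and_iff_right (Fin.succ_ne_zero i)
    have hIeq : I = insert 0 (J.map (Fin.succEmb n)) := by
      ext x
      simp only [Finset.mem_insert, Finset.mem_map, Fin.coe_succEmb]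
      constructor
      · intro hx
        rcases Fin.eq_zero_or_eq_succ x with rfl | ⟨i, rfl⟩
        · exact Or.inl rfl
        · exact Or.inr ⟨i, (hmemJ i).2 hx, rfl⟩
      · rintro (rfl | ⟨i, hi, rfl⟩)
        · exact h0
        · exact (hmemJ i).1 hi
    refine ⟨J, ⟨?_, ?_⟩, hIeq.symm⟩
    · rw [mem_indepFinsets] at hI ⊢
      intro u hu w hw hadj
      exact hI _ ((hmemJ u).1 hu) _ ((hmemJ w).1 hw) ((pg_adj_succ u w).2 hadj)
    · intro i hi hival
      have h1 : i.succ ∈ I := (hmemJ i).1 hi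
      have hadj : (pathGraph (n+1)).Adj 0 i.succ := by
        rw [pathGraph_adj]
        left
        simp [Fin.val_succ, hival]
      exact (mem_indepFinsets.1 hI) _ h0 _ h1 hadj
  · rintro ⟨J, ⟨hJ, hJ0⟩, rfl⟩
    refine ⟨?_, Finset.mem_insert_self _ _⟩
    rw [mem_indepFinsets]
    intro u hu w hw hadj
    simp only [Finset.mem_insert, Finset.mem_map, Fin.coe_succEmb] at hu hw
    have hzero : ∀ y : Fin n, y ∈ J → ¬ (pathGraph (n+1)).Adj 0 y.succ := by
      intro y hy hadj'
      rw [pathGraph_adj] at hadj'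
      simp only [Fin.val_succ, Fin.val_zero] at hadj'
      rcases hadj' with h | h
      · exact hJ0 y hy (by omega)
      · omega
    rcases hu with rfl | ⟨i, hi, rfl⟩
    · rcases hw with rfl | ⟨j, hj, rfl⟩
      · exact (pathGraph (n+1)).irrefl hadj
      · exact hzero j hj hadj
    · rcases hw with rfl | ⟨j, hj, rfl⟩
      · exact hzero i hi hadj.symm
      · exact (mem_indepFinsets.1 hJ) _ hi _ hj ((pg_adj_succ i j).1 hadj)

noncomputable def Zp (lam : ℝ) : ℕ → ℝ
  | 0 => 1
  | 1 => 1
  | (n+2) => Zp lam (n+1) + lam * Zp lam n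

lemma hcZ_split {V : Type*} [Fintype V] (G : SimpleGraph V) (v : V) (lam : ℝ) :
    hcZ G lam = hcZin G v lam + hcZout G v lam :=
  (Finset.sum_filter_add_sum_filter_not _ _ _).symm

lemma hcZout_def' {V : Type*} [Fintype V] [DecidableEq V] (G : SimpleGraph V) (v : V) (lam : ℝ) :
    hcZout G v lam = ∑ I ∈ (indepFinsets G).filter (fun I => v ∉ I), lam ^ I.card := by
  rw [hcZout, Finset.filter_congr_decidable]

lemma hcZin_def' {V : Type*} [Fintype V] [DecidableEq V] (G : SimpleGraph V) (v : V) (lam : ℝ) :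
    hcZin G v lam = ∑ I ∈ (indepFinsets G).filter (fun I => v ∈ I), lam ^ I.card := by
  rw [hcZin, Finset.filter_congr_decidable]

lemma hcZout_succ (n : ℕ) (lam : ℝ) :
    hcZout (pathGraph (n+1)) 0 lam = hcZ (pathGraph n) lam := by
  rw [hcZout_def', filter_out_eq, Finset.sum_image (fun a _ b _ h => Finset.map_injective _ h)]
  simp [hcZ]

lemma hcZin_succ (n : ℕ) (lam : ℝ) :
    hcZin (pathGraph (n+1)) 0 lam
      = lam * ∑ J ∈ (indepFinsets (pathGraph n)).filter (fun J => ∀ i ∈ J, Fin.val i ≠ 0),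
          lam ^ J.card := by
  rw [hcZin_def', filter_in_eq, Finset.sum_image ?_, Finset.mul_sum]
  · apply Finset.sum_congr rfl
    intro J _
    have h0 : (0 : Fin (n+1)) ∉ J.map (Fin.succEmb n) := by
      simp only [Finset.mem_map, Fin.coe_succEmb]
      rintro ⟨i, _, hi⟩
      exact Fin.succ_ne_zero i hi
    rw [Finset.card_insert_of_notMem h0, Finset.card_map, pow_succ]
    ring
  · intro a _ b _ h
    have h0a : (0 : Fin (n+1)) ∉ a.map (Fin.succEmb n) := by
      simp only [Finset.mem_map, Fin.coe_succEmb]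
      rintro ⟨i, _, hi⟩; exact Fin.succ_ne_zero i hi
    have h0b : (0 : Fin (n+1)) ∉ b.map (Fin.succEmb n) := by
      simp only [Finset.mem_map, Fin.coe_succEmb]
      rintro ⟨i, _, hi⟩; exact Fin.succ_ne_zero i hi
    have := congrArg (fun s => Finset.erase s 0) h
    simp only [Finset.erase_insert h0a, Finset.erase_insert h0b] at this
    exact Finset.map_injective _ this

lemma indep0 : indepFinsets (pathGraph 0) = {(∅ : Finset (Fin 0))} := by
  apply Finset.eq_singleton_iff_unique_mem.2
  constructor
  · simp [indepFinsets]
    exact (Finset.eq_empty_of_isEmpty _).symm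
  · intro I _
    exact Finset.eq_empty_of_isEmpty I

lemma hcZ_zero (lam : ℝ) : hcZ (pathGraph 0) lam = 1 := by
  simp [hcZ, indep0]

lemma hcZin_one (lam : ℝ) : hcZin (pathGraph 1) 0 lam = lam := by
  rw [hcZin_succ, indep0]
  simp

lemma filter_ne_zero_eq (n : ℕ) :
    (indepFinsets (pathGraph (n+1))).filter (fun J => ∀ i ∈ J, Fin.val i ≠ 0)
      = (indepFinsets (pathGraph (n+1))).filter (fun J => (0 : Fin (n+1)) ∉ J) := by
  apply Finset.filter_congr
  intro J _
  constructor
  · intro h h0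
    exact h 0 h0 rfl
  · intro h i hi hv
    exact h ((Fin.ext hv : i = 0) ▸ hi)

lemma main_rec (lam : ℝ) : ∀ n : ℕ,
    hcZout (pathGraph (n+1)) 0 lam = Zp lam (n+1) ∧
    hcZin (pathGraph (n+1)) 0 lam = lam * Zp lam n := by
  intro n
  induction n with
  | zero =>
    constructor
    · rw [hcZout_succ, hcZ_zero]; rfl
    · rw [hcZin_one]; simp [Zp]
  | succ m ih =>
    constructor
    · rw [hcZout_succ, hcZ_split (pathGraph (m+1)) 0 lam, ih.1, ih.2]
      show _ = Zp lam (m+2)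
      rw [Zp]
      ring
    · rw [hcZin_succ, filter_ne_zero_eq, ← hcZout_def', ih.1]

noncomputable def rho (lam : ℝ) : ℝ := Real.sqrt (-lam)
noncomputable def theta (lam : ℝ) : ℝ := Real.arccos (1/(2 * rho lam))

section
variable {lam : ℝ} (hlam : lam < -1/4)
include hlam

lemma rho_pos : 0 < rho lam := Real.sqrt_pos.2 (by linarith)

lemma rho_sq : (rho lam)^2 = -lam := Real.sq_sqrt (by linarith)

lemma rho_gt_half : 1/2 < rho lam := by
  have h : (1/2 : ℝ)^2 < -lam := by norm_num; linarith
  exact (Real.lt_sqrt (by norm_num)).2 h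

lemma cos_theta : Real.cos (theta lam) = 1/(2 * rho lam) := by
  have h1 : (0:ℝ) < 2 * rho lam := by have := rho_pos hlam; linarith
  have h2 : (1:ℝ) < 2 * rho lam := by have := rho_gt_half hlam; linarith
  apply Real.cos_arccos
  · have : (0:ℝ) ≤ 1/(2 * rho lam) := by positivity
    linarith
  · rw [div_le_one h1]; linarith

lemma theta_pos : 0 < theta lam := by
  have h2 : (1:ℝ) < 2 * rho lam := by have := rho_gt_half hlam; linarith
  exact Real.arccos_pos.2 (by rw [div_lt_one (by linarith)]; linarith)

lemma theta_lt : theta lam < Real.pi / 2 := by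
  have h1 : (0:ℝ) < 2 * rho lam := by have := rho_pos hlam; linarith
  exact Real.arccos_lt_pi_div_two.2 (by positivity)

lemma sin_theta_pos : 0 < Real.sin (theta lam) := by
  apply Real.sin_pos_of_pos_of_lt_pi (theta_pos hlam)
  have := theta_lt hlam
  have := Real.pi_pos
  linarith

lemma lam_eq : lam = -(rho lam)^2 := by
  have := rho_sq hlam; linarith

lemma Zp_closed : ∀ n : ℕ,
    Real.sin (theta lam) * Zp lam n = (rho lam)^n * Real.sin ((n+1) * theta lam) := by
  have hρ : 0 < rho lam := rho_pos hlam
  have hc : Real.cos (theta lam) = 1/(2 * rho lam) := cos_theta hlam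
  have hl : lam = -(rho lam)^2 := lam_eq hlam
  intro n
  induction n using Nat.twoStepInduction with
  | zero => simp [Zp]
  | one =>
    show Real.sin (theta lam) * Zp lam 1 = (rho lam)^1 * Real.sin (((1:ℕ)+1) * theta lam)
    have : (((1:ℕ):ℝ)+1) * theta lam = 2 * theta lam := by push_cast; ring
    rw [this, Real.sin_two_mul, hc]
    show Real.sin (theta lam) * 1 = _
    field_simp
  | more n ih1 ih2 =>
    show Real.sin (theta lam) * Zp lam (n+2) = (rho lam)^(n+2) * Real.sin ((((n+2:ℕ):ℝ)+1) * theta lam)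
    have e3 : (((n+2:ℕ):ℝ)+1) * theta lam = ((((n+1:ℕ):ℝ)+1) * theta lam) + theta lam := by
      push_cast; ring
    have e1 : (((n:ℕ):ℝ)+1) * theta lam = ((((n+1:ℕ):ℝ)+1) * theta lam) - theta lam := by
      push_cast; ring
    have key : Real.sin (theta lam) * Zp lam (n+2)
        = (rho lam)^(n+1) * Real.sin ((((n+1:ℕ):ℝ)+1) * theta lam)
          + lam * ((rho lam)^n * Real.sin ((((n:ℕ):ℝ)+1) * theta lam)) := by
      rw [show Zp lam (n+2) = Zp lam (n+1) + lam * Zp lam n from rfl, ← ih2, ← ih1]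
      ring
    rw [key, e3, e1, Real.sin_add, Real.sin_sub, hc]
    have hρ' : rho lam ≠ 0 := hρ.ne'
    set R := rho lam with hR
    set T := theta lam with hT
    rw [hl]
    field_simp
    ring

lemma theta_irr (hbad : lam ∉ badSet) : Irrational (theta lam / Real.pi) := by
  rintro ⟨q, hq⟩
  apply hbad
  have hπ : Real.pi ≠ 0 := Real.pi_ne_zero
  refine ⟨theta lam, ⟨theta_pos hlam, theta_lt hlam⟩, ⟨q, ?_⟩, ?_⟩
  · field_simp at hq
    linarith
  · rw [cos_theta hlam]
    have h2 := rho_sq hlam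
    have hρ := rho_pos hlam
    have key : (4:ℝ) * (1 / (2 * rho lam))^2 = 1/(rho lam)^2 := by
      field_simp
      ring
    rw [key, one_div, div_eq_mul_inv, inv_inv]
    nlinarith [h2]

lemma sin_nat_ne (hirr : Irrational (theta lam / Real.pi)) (N : ℕ) (hN : 0 < N) :
    Real.sin ((N:ℝ) * theta lam) ≠ 0 := by
  intro h
  obtain ⟨z, hz⟩ := Real.sin_eq_zero_iff.1 h
  apply hirr
  refine ⟨(z:ℚ)/(N:ℚ), ?_⟩
  have hπ : Real.pi ≠ 0 := Real.pi_ne_zero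
  have hNne : ((N:ℕ):ℝ) ≠ 0 := Nat.cast_ne_zero.2 hN.ne'
  push_cast
  rw [div_eq_div_iff hNne hπ]
  linarith [hz]

lemma Zp_ne (hirr : Irrational (theta lam / Real.pi)) (n : ℕ) : Zp lam n ≠ 0 := by
  intro h
  have h1 := Zp_closed hlam n
  rw [h, mul_zero] at h1
  have h2 : Real.sin (((n:ℝ)+1) * theta lam) ≠ 0 := by
    have := sin_nat_ne hlam hirr (n+1) (Nat.succ_pos n)
    convert this using 2
    push_cast
    ring
  have hρ : (0:ℝ) < (rho lam)^n := pow_pos (rho_pos hlam) n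
  exact h2 (by
    have := h1.symm
    rcases mul_eq_zero.1 this with h3 | h3
    · exact absurd h3 hρ.ne'
    · exact h3)

lemma ratio_eq (hirr : Irrational (theta lam / Real.pi)) (n : ℕ) :
    lam * Zp lam n / Zp lam (n+1)
      = -(rho lam) * Real.sin (((n+1:ℕ):ℝ) * theta lam)
          / Real.sin (((n+1:ℕ):ℝ) * theta lam + theta lam) := by
  have hs : Real.sin (theta lam) ≠ 0 := (sin_theta_pos hlam).ne'
  have hl : lam = -(rho lam)^2 := lam_eq hlam
  have h1 := Zp_closed hlam n
  have h2 := Zp_closed hlam (n+1)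
  have e1 : ((n:ℝ)+1) * theta lam = ((n+1:ℕ):ℝ) * theta lam := by push_cast; ring
  have e2 : (((n+1:ℕ):ℝ)+1) * theta lam = ((n+1:ℕ):ℝ) * theta lam + theta lam := by
    push_cast; ring
  rw [e1] at h1
  rw [e2] at h2
  have hZne : Zp lam (n+1) ≠ 0 := Zp_ne hlam hirr (n+1)
  have hS2ne : Real.sin (((n+1:ℕ):ℝ) * theta lam + theta lam) ≠ 0 := by
    rw [← e2]
    have := sin_nat_ne hlam hirr (n+2) (by omega)
    convert this using 2
    push_cast
    ring
  rw [div_eq_div_iff hZne hS2ne]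
  apply mul_left_cancel₀ hs
  rw [pow_succ] at h2
  linear_combination (lam * Real.sin (((n+1:ℕ):ℝ) * theta lam + theta lam)) * h1
    + ((rho lam) * Real.sin (((n+1:ℕ):ℝ) * theta lam)) * h2
    + ((rho lam)^n * Real.sin (((n+1:ℕ):ℝ) * theta lam)
        * Real.sin (((n+1:ℕ):ℝ) * theta lam + theta lam)) * hl

lemma exists_target (lam' : ℝ) : ∃ xs : ℝ,
    Real.sin (xs + theta lam) ≠ 0 ∧
    -(rho lam) * Real.sin xs / Real.sin (xs + theta lam) = lam' := by
  have hρ := rho_pos hlam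
  have hc := cos_theta hlam
  have hs := sin_theta_pos hlam
  have hcpos : 0 < Real.cos (theta lam) := by rw [hc]; positivity
  by_cases hd : rho lam + lam' * Real.cos (theta lam) = 0
  · refine ⟨Real.pi/2, ?_, ?_⟩
    · rw [Real.sin_add, Real.sin_pi_div_two, Real.cos_pi_div_two, one_mul, zero_mul, add_zero]
      exact hcpos.ne'
    · rw [Real.sin_add, Real.sin_pi_div_two, Real.cos_pi_div_two, one_mul, zero_mul, add_zero]
      rw [div_eq_iff hcpos.ne']
      linarith [hd]
  · set d := rho lam + lam' * Real.cos (theta lam) with hddef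
    set t := -lam' * Real.sin (theta lam) / d with htdef
    have hq : (0:ℝ) < Real.sqrt (1 + t^2) := Real.sqrt_pos.2 (by positivity)
    have hsin := Real.sin_arctan t
    have hcos := Real.cos_arctan t
    have hsum : Real.sin (Real.arctan t + theta lam)
        = (Real.sin (theta lam) * rho lam / d) / Real.sqrt (1 + t^2) := by
      rw [Real.sin_add, hsin, hcos, htdef, hddef]
      have hd' : lam' * Real.cos (theta lam) + rho lam ≠ 0 := by rw [add_comm]; exact hd
      field_simp
      linear_combination -(mul_inv_cancel₀ hd')
    refine ⟨Real.arctan t, ?_, ?_⟩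
    · rw [hsum]
      apply div_ne_zero _ hq.ne'
      apply div_ne_zero _ hd
      positivity
    · rw [hsum, hsin, htdef]
      field_simp

lemma g_per (y : ℝ) (k : ℤ) :
    -(rho lam) * Real.sin (y + k * Real.pi) / Real.sin ((y + k * Real.pi) + theta lam)
      = -(rho lam) * Real.sin y / Real.sin (y + theta lam) := by
  rw [Real.sin_add_int_mul_pi,
    show (y + k * Real.pi) + theta lam = (y + theta lam) + k * Real.pi by ring,
    Real.sin_add_int_mul_pi]
  have hk : ((-1:ℝ))^k ≠ 0 := by
    apply zpow_ne_zero
    norm_num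
  rw [show -(rho lam) * ((-1:ℝ)^k * Real.sin y) = (-1:ℝ)^k * (-(rho lam) * Real.sin y) by ring,
    mul_div_mul_left _ _ hk]

end

lemma small_step (θ : ℝ) (hirr : Irrational (θ / Real.pi)) (ε : ℝ) (hε : 0 < ε) :
    ∃ (j : ℕ) (k : ℤ), 1 ≤ j ∧ 0 < |(j:ℝ) * θ - k * Real.pi| ∧ |(j:ℝ) * θ - k * Real.pi| < ε := by
  have hπ : (0:ℝ) < Real.pi := Real.pi_pos
  obtain ⟨N, hN⟩ := exists_nat_gt (Real.pi / ε)
  have hN0 : 0 < N := by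
    have : 0 < Real.pi / ε := by positivity
    exact_mod_cast this.trans hN
  obtain ⟨k, j, hj0, hjN, hjk⟩ := Real.exists_int_int_abs_mul_sub_le (θ / Real.pi) hN0
  have hj0' : (0:ℝ) < (j:ℝ) := by exact_mod_cast hj0
  have hne : (j:ℝ) * (θ / Real.pi) - k ≠ 0 := by
    intro h
    apply hirr
    refine ⟨(k:ℚ) / (j:ℚ), ?_⟩
    have h2 : θ / Real.pi = (k:ℝ) / (j:ℝ) := by
      field_simp at h ⊢
      linarith
    rw [h2]
    push_cast
    ring
  have hcast : ((j.toNat : ℕ) : ℝ) = (j:ℝ) := by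
    exact_mod_cast Int.toNat_of_nonneg hj0.le
  have heq : (j:ℝ) * θ - k * Real.pi = ((j:ℝ) * (θ / Real.pi) - k) * Real.pi := by
    field_simp
  refine ⟨j.toNat, k, by omega, ?_, ?_⟩
  · rw [hcast, heq, abs_mul, abs_of_pos hπ]
    positivity
  · rw [hcast, heq, abs_mul, abs_of_pos hπ]
    have h2 : (1 / ((N:ℝ) + 1)) * Real.pi < ε := by
      have h3 : Real.pi < (N:ℝ) * ε := (div_lt_iff₀ hε).mp hN
      rw [div_mul_eq_mul_div, one_mul, div_lt_iff₀ (by positivity)]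
      nlinarith
    calc |(j:ℝ) * (θ / Real.pi) - k| * Real.pi ≤ (1 / ((N:ℝ)+1)) * Real.pi :=
          mul_le_mul_of_nonneg_right hjk hπ.le
      _ < ε := h2

lemma approx (θ : ℝ) (hirr : Irrational (θ / Real.pi)) (x ε : ℝ) (hε : 0 < ε) :
    ∃ (m : ℕ) (k : ℤ), 1 ≤ m ∧ |(m:ℝ) * θ - k * Real.pi - x| < ε := by
  have hπ : (0:ℝ) < Real.pi := Real.pi_pos
  obtain ⟨j, k₀, hj1, hδpos, hδlt⟩ := small_step θ hirr ε hε
  set δ := (j:ℝ) * θ - k₀ * Real.pi with hδdef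
  set p : ℤ := ⌊x / Real.pi⌋ with hp
  set y : ℝ := x - Real.pi * p with hy
  have hδne : δ ≠ 0 := abs_pos.mp hδpos
  have hy0 : 0 ≤ y := by
    rw [hy]
    have h4 : (p:ℝ) * Real.pi ≤ x := by
      rw [hp]
      calc (⌊x / Real.pi⌋ : ℝ) * Real.pi ≤ (x / Real.pi) * Real.pi :=
            mul_le_mul_of_nonneg_right (Int.floor_le _) hπ.le
        _ = x := by field_simp
    linarith
  have hyπ : y < Real.pi := by
    rw [hy]
    have h5 : x < ((p:ℝ) + 1) * Real.pi := by
      rw [hp]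
      calc x = (x / Real.pi) * Real.pi := by field_simp
        _ < ((⌊x / Real.pi⌋ : ℝ) + 1) * Real.pi :=
            mul_lt_mul_of_pos_right (Int.lt_floor_add_one _) hπ
    linarith
  rcases lt_or_gt_of_ne hδne.symm with hpos | hneg
  · -- 0 < δ
    set u : ℝ := y + Real.pi with hu
    have hu0 : 0 < u := by rw [hu]; linarith
    set t : ℤ := ⌈u / δ⌉ with ht
    have ht1 : 1 ≤ t := Int.ceil_pos.2 (by positivity)
    have htl : u ≤ (t:ℝ) * δ := by
      have h6 : u / δ ≤ (t:ℝ) := by rw [ht]; exact_mod_cast Int.le_ceil (u / δ)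
      calc u = (u / δ) * δ := by field_simp
        _ ≤ (t:ℝ) * δ := mul_le_mul_of_nonneg_right h6 hpos.le
    have htu : (t:ℝ) * δ < u + δ := by
      have h7 : (t:ℝ) < u / δ + 1 := by rw [ht]; exact_mod_cast Int.ceil_lt_add_one (u / δ)
      calc (t:ℝ) * δ < (u / δ + 1) * δ := mul_lt_mul_of_pos_right h7 hpos
        _ = u + δ := by field_simp
    have habs : δ < ε := (abs_of_pos hpos) ▸ hδlt
    refine ⟨t.toNat * j, t * k₀ - p + 1, ?_, ?_⟩
    · have h8 : 1 ≤ t.toNat := by omega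
      exact Nat.one_le_iff_ne_zero.2 (Nat.mul_ne_zero (by omega) (by omega))
    · have hcast : ((t.toNat * j : ℕ) : ℝ) = (t:ℝ) * (j:ℝ) := by
        have htn : ((t.toNat : ℕ) : ℝ) = (t:ℝ) := by
          exact_mod_cast Int.toNat_of_nonneg (by omega : (0:ℤ) ≤ t)
        push_cast
        rw [htn]
      rw [hcast]
      have heq : (t:ℝ) * (j:ℝ) * θ - ((t * k₀ - p + 1 : ℤ):ℝ) * Real.pi - x
          = (t:ℝ) * δ - u := by
        push_cast
        rw [hδdef, hu, hy]
        ring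
      rw [heq, abs_lt]
      constructor <;> linarith
  · -- δ < 0
    have hneg' : δ < 0 := hneg
    set u : ℝ := y - Real.pi with hu
    have hu0 : u < 0 := by rw [hu]; linarith
    set t : ℤ := ⌈u / δ⌉ with ht
    have ht1 : 1 ≤ t := Int.ceil_pos.2 (div_pos_of_neg_of_neg hu0 hneg')
    have htl : (t:ℝ) * δ ≤ u := by
      have h6 : u / δ ≤ (t:ℝ) := by rw [ht]; exact_mod_cast Int.le_ceil (u / δ)
      calc (t:ℝ) * δ ≤ (u / δ) * δ := mul_le_mul_of_nonpos_right h6 hneg'.le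
        _ = u := by field_simp
    have htu : u + δ < (t:ℝ) * δ := by
      have h7 : (t:ℝ) < u / δ + 1 := by rw [ht]; exact_mod_cast Int.ceil_lt_add_one (u / δ)
      calc u + δ = (u / δ + 1) * δ := by field_simp
        _ < (t:ℝ) * δ := mul_lt_mul_of_neg_right h7 hneg'
    have habs : -δ < ε := by
      have := abs_of_neg hneg' ▸ hδlt
      linarith [this]
    refine ⟨t.toNat * j, t * k₀ - p - 1, ?_, ?_⟩
    · have h8 : 1 ≤ t.toNat := by omega
      exact Nat.one_le_iff_ne_zero.2 (Nat.mul_ne_zero (by omega) (by omega))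
    · have hcast : ((t.toNat * j : ℕ) : ℝ) = (t:ℝ) * (j:ℝ) := by
        have htn : ((t.toNat : ℕ) : ℝ) = (t:ℝ) := by
          exact_mod_cast Int.toNat_of_nonneg (by omega : (0:ℤ) ≤ t)
        push_cast
        rw [htn]
      rw [hcast]
      have heq : (t:ℝ) * (j:ℝ) * θ - ((t * k₀ - p - 1 : ℤ):ℝ) * Real.pi - x
          = (t:ℝ) * δ - u := by
        push_cast
        rw [hδdef, hu, hy]
        ring
      rw [heq, abs_lt]
      constructor <;> linarith


end PathDense

open PathDense in
theorem path_implements_dense (lam : ℝ) (hlam : lam < -1/4) (hbad : lam ∉ badSet)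
    (lam' ε : ℝ) (hε : 0 < ε) :
    ∃ (n : ℕ) (hn : 0 < n),
      hcZout (SimpleGraph.pathGraph n) ⟨0, hn⟩ lam ≠ 0 ∧
      |hcZin (SimpleGraph.pathGraph n) ⟨0, hn⟩ lam /
          hcZout (SimpleGraph.pathGraph n) ⟨0, hn⟩ lam - lam'| ≤ ε := by
  have hirr : Irrational (theta lam / Real.pi) := theta_irr hlam hbad
  obtain ⟨xs, hxne, hxval⟩ := exists_target hlam lam'
  have hcont : ContinuousAt
      (fun x => -(rho lam) * Real.sin x / Real.sin (x + theta lam)) xs := by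
    apply ContinuousAt.div
    · fun_prop
    · fun_prop
    · exact hxne
  obtain ⟨δc, hδc, hball⟩ := Metric.continuousAt_iff.mp hcont ε hε
  obtain ⟨m, k, hm1, hmk⟩ := approx (theta lam) hirr xs δc hδc
  obtain ⟨n', rfl⟩ : ∃ n', m = n' + 1 := ⟨m - 1, by omega⟩
  refine ⟨n' + 1, Nat.succ_pos n', ?_⟩
  have hv : (⟨0, Nat.succ_pos n'⟩ : Fin (n'+1)) = 0 := by
    apply Fin.ext
    simp
  rw [hv]
  have hout := (main_rec lam n').1
  have hin := (main_rec lam n').2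
  refine ⟨by rw [hout]; exact Zp_ne hlam hirr (n'+1), ?_⟩
  rw [hin, hout, mul_div_assoc] at *
  rw [show lam * (Zp lam n' / Zp lam (n'+1)) = lam * Zp lam n' / Zp lam (n'+1) by ring,
    ratio_eq hlam hirr n']
  set x0 : ℝ := ((n'+1:ℕ):ℝ) * theta lam - k * Real.pi with hx0
  have e : ((n'+1:ℕ):ℝ) * theta lam = x0 + k * Real.pi := by rw [hx0]; ring
  rw [e, show (x0 + (k:ℝ) * Real.pi) + theta lam = (x0 + k * Real.pi) + theta lam by ring,
    g_per hlam x0 k]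
  have hdist : dist x0 xs < δc := by
    rw [Real.dist_eq, hx0]
    convert hmk using 2
  have := hball hdist
  rw [Real.dist_eq] at this
  rw [hxval] at this
  exact le_of_lt this
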